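/- Let a, b, c, d be real numbers. The quartic polynomial λ⁴ + aλ³ + bλ² + cλ + d is Schur stable if and only if |c − a·d| < 1 − d², |a + c| < b + d + 1, and b < (1 + d) + (c − a·d)(a − c)/(d − 1)². -/

import Mathlib

/-! Helper lemmas for the Schur–Cohn reduction. -/

private lemma key (w r : ℂ) (hw : 1 ≤ ‖w‖) (hr : ‖r‖ < 1) :
    ‖(1 - r * w)‖ ≤ ‖((starRingEnd ℂ) w - r)‖ := by
  have hid : Complex.normSq ((starRingEnd ℂ) w - r) - Complex.normSq (1 - r * w)
      = (Complex.normSq w - 1) * (1 - Complex.normSq r) := by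
    simp [Complex.normSq_apply, Complex.sub_re, Complex.sub_im, Complex.mul_re,
      Complex.mul_im, Complex.one_re, Complex.one_im]
    ring
  have h2 : 1 ≤ Complex.normSq w := by
    rw [← Complex.sq_norm]; nlinarith
  have h3 : Complex.normSq r < 1 := by
    rw [← Complex.sq_norm]; nlinarith [norm_nonneg r]
  have h4 : Complex.normSq (1 - r * w) ≤ Complex.normSq ((starRingEnd ℂ) w - r) := by
    nlinarith
  rw [Complex.norm_def, Complex.norm_def]
  exact Real.sqrt_le_sqrt h4

open Polynomial in
private lemma exroot2 (B C : ℂ) : ∃ r : ℂ, r^2 + B*r + C = 0 := by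
  have h : (0 : WithBot ℕ) < (X^2 + Polynomial.C B * X + Polynomial.C C : ℂ[X]).degree := by
    have : (X^2 + Polynomial.C B * X + Polynomial.C C : ℂ[X]).degree = 2 := by
      compute_degree!
    rw [this]; norm_num
  obtain ⟨z, hz⟩ := Complex.exists_root h
  exact ⟨z, by simpa [Polynomial.IsRoot] using hz⟩

open Polynomial in
private lemma exroot3 (A B C : ℂ) : ∃ r : ℂ, r^3 + A*r^2 + B*r + C = 0 := by
  have h : (0 : WithBot ℕ) < (X^3 + Polynomial.C A * X^2 + Polynomial.C B * X + Polynomial.C C : ℂ[X]).degree := by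
    have : (X^3 + Polynomial.C A * X^2 + Polynomial.C B * X + Polynomial.C C : ℂ[X]).degree = 3 := by
      compute_degree!
    rw [this]; norm_num
  obtain ⟨z, hz⟩ := Complex.exists_root h
  exact ⟨z, by simpa [Polynomial.IsRoot] using hz⟩

open Polynomial in
private lemma exroot4 (A B C D : ℂ) : ∃ r : ℂ, r^4 + A*r^3 + B*r^2 + C*r + D = 0 := by
  have h : (0 : WithBot ℕ) < (X^4 + Polynomial.C A * X^3 + Polynomial.C B * X^2 + Polynomial.C C * X + Polynomial.C D : ℂ[X]).degree := by
    have : (X^4 + Polynomial.C A * X^3 + Polynomial.C B * X^2 + Polynomial.C C * X + Polynomial.C D : ℂ[X]).degree = 4 := by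
      compute_degree!
    rw [this]; norm_num
  obtain ⟨z, hz⟩ := Complex.exists_root h
  exact ⟨z, by simpa [Polynomial.IsRoot] using hz⟩

private lemma factor2 (B C : ℂ) : ∃ s1 s2 : ℂ, ∀ z : ℂ, z^2 + B*z + C = (z - s1) * (z - s2) := by
  obtain ⟨r, hr⟩ := exroot2 B C
  exact ⟨r, -B - r, fun z => by linear_combination hr⟩

private lemma factor3 (A B C : ℂ) : ∃ s1 s2 s3 : ℂ, ∀ z : ℂ,
    z^3 + A*z^2 + B*z + C = (z - s1) * (z - s2) * (z - s3) := by
  obtain ⟨r, hr⟩ := exroot3 A B C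
  obtain ⟨s1, s2, h⟩ := factor2 (A + r) (B + A*r + r^2)
  exact ⟨s1, s2, r, fun z => by linear_combination (z - r) * (h z) + hr⟩

private lemma factor4 (A B C D : ℂ) : ∃ s1 s2 s3 s4 : ℂ, ∀ z : ℂ,
    z^4 + A*z^3 + B*z^2 + C*z + D = (z - s1) * (z - s2) * (z - s3) * (z - s4) := by
  obtain ⟨r, hr⟩ := exroot4 A B C D
  obtain ⟨s1, s2, s3, h⟩ := factor3 (A + r) (B + A*r + r^2) (C + B*r + A*r^2 + r^3)
  exact ⟨s1, s2, s3, r, fun z => by linear_combination (z - r) * (h z) + hr⟩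

private lemma factor2' (M B C : ℂ) (hM : M ≠ 0) : ∃ s1 s2 : ℂ, ∀ z : ℂ,
    M*z^2 + B*z + C = M * ((z - s1) * (z - s2)) := by
  obtain ⟨s1, s2, h⟩ := factor2 (B/M) (C/M)
  refine ⟨s1, s2, fun z => ?_⟩
  have h2 := h z
  field_simp at h2
  linear_combination h2

private lemma factor3' (M A B C : ℂ) (hM : M ≠ 0) : ∃ s1 s2 s3 : ℂ, ∀ z : ℂ,
    M*z^3 + A*z^2 + B*z + C = M * ((z - s1) * (z - s2) * (z - s3)) := by
  obtain ⟨s1, s2, s3, h⟩ := factor3 (A/M) (B/M) (C/M)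
  refine ⟨s1, s2, s3, fun z => ?_⟩
  have h2 := h z
  field_simp at h2
  linear_combination h2

private lemma abs_conj_eval2 (L B C : ℝ) (w : ℂ) :
    ‖((L:ℂ)*w^2 + (B:ℂ)*w + (C:ℂ))‖
      = ‖((L:ℂ)*((starRingEnd ℂ) w)^2 + (B:ℂ)*((starRingEnd ℂ) w) + (C:ℂ))‖ := by
  rw [show (L:ℂ)*((starRingEnd ℂ) w)^2 + (B:ℂ)*((starRingEnd ℂ) w) + (C:ℂ)
      = (starRingEnd ℂ) ((L:ℂ)*w^2 + (B:ℂ)*w + (C:ℂ)) by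
    simp [map_add, map_mul, map_pow, Complex.conj_ofReal]]
  rw [Complex.norm_conj]

private lemma revBound2 (L B C : ℝ) (hL : 0 < L) (t1 t2 : ℂ)
    (hf : ∀ z : ℂ, (L:ℂ)*z^2 + (B:ℂ)*z + (C:ℂ) = L * ((z - t1) * (z - t2)))
    (h1 : ‖t1‖ < 1) (h2 : ‖t2‖ < 1) (w : ℂ) (hw : 1 ≤ ‖w‖) :
    ‖((C:ℂ)*w^2 + (B:ℂ)*w + (L:ℂ))‖ ≤ ‖((L:ℂ)*w^2 + (B:ℂ)*w + (C:ℂ))‖ := by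
  have hw0 : w ≠ 0 := by intro h; rw [h] at hw; simp at hw; linarith
  have habs : ∀ x : ℂ, ‖((L:ℂ) * x)‖ = L * ‖x‖ := by
    intro x; rw [norm_mul, Complex.norm_real, Real.norm_eq_abs, abs_of_pos hL]
  have hrev : (C:ℂ)*w^2 + (B:ℂ)*w + (L:ℂ) = (L:ℂ) * ((1 - t1*w) * (1 - t2*w)) := by
    have h := hf w⁻¹
    field_simp at h
    refine mul_left_cancel₀ (pow_ne_zero 3 hw0) ?_
    linear_combination w^3 * h
  rw [hrev, habs, abs_conj_eval2, hf ((starRingEnd ℂ) w), habs]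
  have hwc : 1 ≤ ‖((starRingEnd ℂ) w)‖ := by rwa [Complex.norm_conj]
  have k1 := key w t1 hw h1
  have k2 := key w t2 hw h2
  simp only [norm_mul]
  have n1 : (0:ℝ) ≤ ‖(1 - t1*w)‖ := norm_nonneg _
  have g1 : (0:ℝ) ≤ ‖((starRingEnd ℂ) w - t1)‖ := norm_nonneg _
  gcongr

private lemma abs_conj_eval3 (M A B C : ℝ) (w : ℂ) :
    ‖((M:ℂ)*w^3 + (A:ℂ)*w^2 + (B:ℂ)*w + (C:ℂ))‖
      = ‖((M:ℂ)*((starRingEnd ℂ) w)^3 + (A:ℂ)*((starRingEnd ℂ) w)^2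
          + (B:ℂ)*((starRingEnd ℂ) w) + (C:ℂ))‖ := by
  rw [show (M:ℂ)*((starRingEnd ℂ) w)^3 + (A:ℂ)*((starRingEnd ℂ) w)^2
        + (B:ℂ)*((starRingEnd ℂ) w) + (C:ℂ)
      = (starRingEnd ℂ) ((M:ℂ)*w^3 + (A:ℂ)*w^2 + (B:ℂ)*w + (C:ℂ)) by
    simp [map_add, map_mul, map_pow, Complex.conj_ofReal]]
  rw [Complex.norm_conj]

private lemma revBound3 (M A B C : ℝ) (hM : 0 < M) (s1 s2 s3 : ℂ)
    (hf : ∀ z : ℂ, (M:ℂ)*z^3 + (A:ℂ)*z^2 + (B:ℂ)*z + (C:ℂ)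
        = M * ((z - s1) * (z - s2) * (z - s3)))
    (h1 : ‖s1‖ < 1) (h2 : ‖s2‖ < 1) (h3 : ‖s3‖ < 1)
    (w : ℂ) (hw : 1 ≤ ‖w‖) :
    ‖((C:ℂ)*w^3 + (B:ℂ)*w^2 + (A:ℂ)*w + (M:ℂ))‖
      ≤ ‖((M:ℂ)*w^3 + (A:ℂ)*w^2 + (B:ℂ)*w + (C:ℂ))‖ := by
  have hw0 : w ≠ 0 := by intro h; rw [h] at hw; simp at hw; linarith
  have habs : ∀ x : ℂ, ‖((M:ℂ) * x)‖ = M * ‖x‖ := by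
    intro x; rw [norm_mul, Complex.norm_real, Real.norm_eq_abs, abs_of_pos hM]
  have hrev : (C:ℂ)*w^3 + (B:ℂ)*w^2 + (A:ℂ)*w + (M:ℂ)
      = (M:ℂ) * ((1 - s1*w) * (1 - s2*w) * (1 - s3*w)) := by
    have h := hf w⁻¹
    field_simp at h
    refine mul_left_cancel₀ (pow_ne_zero 6 hw0) ?_
    linear_combination w^6 * h
  rw [hrev, habs, abs_conj_eval3, hf ((starRingEnd ℂ) w), habs]
  have hwc : 1 ≤ ‖((starRingEnd ℂ) w)‖ := by rwa [Complex.norm_conj]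
  have k1 := key w s1 hw h1
  have k2 := key w s2 hw h2
  have k3 := key w s3 hw h3
  simp only [norm_mul]
  have n1 : (0:ℝ) ≤ ‖(1 - s1*w)‖ := norm_nonneg _
  have n2 : (0:ℝ) ≤ ‖(1 - s2*w)‖ := norm_nonneg _
  have g1 : (0:ℝ) ≤ ‖((starRingEnd ℂ) w - s1)‖ := norm_nonneg _
  have g2 : (0:ℝ) ≤ ‖((starRingEnd ℂ) w - s2)‖ := norm_nonneg _
  gcongr

private lemma abs_conj_eval4 (a b c d : ℝ) (w : ℂ) :
    ‖(w^4 + (a:ℂ)*w^3 + (b:ℂ)*w^2 + (c:ℂ)*w + (d:ℂ))‖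
      = ‖(((starRingEnd ℂ) w)^4 + (a:ℂ)*((starRingEnd ℂ) w)^3
          + (b:ℂ)*((starRingEnd ℂ) w)^2 + (c:ℂ)*((starRingEnd ℂ) w) + (d:ℂ))‖ := by
  rw [show ((starRingEnd ℂ) w)^4 + (a:ℂ)*((starRingEnd ℂ) w)^3
        + (b:ℂ)*((starRingEnd ℂ) w)^2 + (c:ℂ)*((starRingEnd ℂ) w) + (d:ℂ)
      = (starRingEnd ℂ) (w^4 + (a:ℂ)*w^3 + (b:ℂ)*w^2 + (c:ℂ)*w + (d:ℂ)) by
    simp [map_add, map_mul, map_pow, Complex.conj_ofReal]]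
  rw [Complex.norm_conj]

private lemma revBound4 (a b c d : ℝ) (s1 s2 s3 s4 : ℂ)
    (hf : ∀ z : ℂ, z^4 + (a:ℂ)*z^3 + (b:ℂ)*z^2 + (c:ℂ)*z + (d:ℂ)
        = (z - s1) * (z - s2) * (z - s3) * (z - s4))
    (h1 : ‖s1‖ < 1) (h2 : ‖s2‖ < 1) (h3 : ‖s3‖ < 1)
    (h4 : ‖s4‖ < 1) (w : ℂ) (hw : 1 ≤ ‖w‖) :
    ‖((d:ℂ)*w^4 + (c:ℂ)*w^3 + (b:ℂ)*w^2 + (a:ℂ)*w + 1)‖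
      ≤ ‖(w^4 + (a:ℂ)*w^3 + (b:ℂ)*w^2 + (c:ℂ)*w + (d:ℂ))‖ := by
  have hw0 : w ≠ 0 := by intro h; rw [h] at hw; simp at hw; linarith
  have hrev : (d:ℂ)*w^4 + (c:ℂ)*w^3 + (b:ℂ)*w^2 + (a:ℂ)*w + 1
      = (1 - s1*w) * (1 - s2*w) * (1 - s3*w) * (1 - s4*w) := by
    have hww : w^10 * w⁻¹^10 = 1 := by rw [← mul_pow, mul_inv_cancel₀ hw0, one_pow]
    have e1 : (d:ℂ)*w^4 + (c:ℂ)*w^3 + (b:ℂ)*w^2 + (a:ℂ)*w + 1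
        = w^4 * (w⁻¹^4 + (a:ℂ)*w⁻¹^3 + (b:ℂ)*w⁻¹^2 + (c:ℂ)*w⁻¹ + (d:ℂ)) := by
      field_simp
      ring
    rw [e1, hf w⁻¹]
    field_simp
  rw [hrev, abs_conj_eval4, hf ((starRingEnd ℂ) w)]
  have hwc : 1 ≤ ‖((starRingEnd ℂ) w)‖ := by rwa [Complex.norm_conj]
  have k1 := key w s1 hw h1
  have k2 := key w s2 hw h2
  have k3 := key w s3 hw h3
  have k4 := key w s4 hw h4
  simp only [norm_mul]
  have n1 : (0:ℝ) ≤ ‖(1 - s1*w)‖ := norm_nonneg _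
  have n2 : (0:ℝ) ≤ ‖(1 - s2*w)‖ := norm_nonneg _
  have n3 : (0:ℝ) ≤ ‖(1 - s3*w)‖ := norm_nonneg _
  have g1 : (0:ℝ) ≤ ‖((starRingEnd ℂ) w - s1)‖ := norm_nonneg _
  have g2 : (0:ℝ) ≤ ‖((starRingEnd ℂ) w - s2)‖ := norm_nonneg _
  have g3 : (0:ℝ) ≤ ‖((starRingEnd ℂ) w - s3)‖ := norm_nonneg _
  gcongr

/-- Linear stability criterion. -/
private lemma lin_stable (P Q : ℝ) (hP : 0 < P) :
    (∀ z : ℂ, (P:ℂ)*z + (Q:ℂ) = 0 → ‖z‖ < 1) ↔ |Q| < P := by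
  have hP0 : (P:ℂ) ≠ 0 := by exact_mod_cast hP.ne'
  constructor
  · intro h
    have hr := h ((-Q/P : ℝ) : ℂ) (by push_cast; field_simp; ring)
    rw [Complex.norm_real, Real.norm_eq_abs, abs_div, abs_neg, abs_of_pos hP, div_lt_one hP] at hr
    exact hr
  · intro h z hz
    have h2 : (P:ℂ) * z = -(Q:ℂ) := by linear_combination hz
    have habs := congrArg (fun x : ℂ => ‖x‖) h2
    rw [norm_mul, norm_neg, Complex.norm_real, Real.norm_eq_abs, Complex.norm_real, Real.norm_eq_abs,
      abs_of_pos hP] at habs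
    nlinarith [norm_nonneg z]

/-- Forward Schur step, quartic: stability gives `|d| < 1` and stability of the reduced cubic. -/
private lemma fwd4 (a b c d : ℝ)
    (S : ∀ z : ℂ, z^4 + (a:ℂ)*z^3 + (b:ℂ)*z^2 + (c:ℂ)*z + (d:ℂ) = 0 → ‖z‖ < 1) :
    |d| < 1 ∧ ∀ z : ℂ, ((1-d^2:ℝ):ℂ)*z^3 + ((a-c*d:ℝ):ℂ)*z^2 + ((b-b*d:ℝ):ℂ)*z
      + ((c-a*d:ℝ):ℂ) = 0 → ‖z‖ < 1 := by
  obtain ⟨s1, s2, s3, s4, hf⟩ := factor4 (a:ℂ) (b:ℂ) (c:ℂ) (d:ℂ)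
  have hs1 : ‖s1‖ < 1 := S s1 ((hf s1).trans (by rw [sub_self s1]; ring))
  have hs2 : ‖s2‖ < 1 := S s2 ((hf s2).trans (by rw [sub_self s2]; ring))
  have hs3 : ‖s3‖ < 1 := S s3 ((hf s3).trans (by rw [sub_self s3]; ring))
  have hs4 : ‖s4‖ < 1 := S s4 ((hf s4).trans (by rw [sub_self s4]; ring))
  have hd : |d| < 1 := by
    have h0 := hf 0
    have hD : |d| = ‖s1‖ * ‖s2‖ * ‖s3‖ * ‖s4‖ := by
      rw [← Real.norm_eq_abs, ← Complex.norm_real,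
        show (d:ℂ) = s1 * s2 * s3 * s4 by linear_combination h0]
      simp [norm_mul]
    rw [hD]
    nlinarith [norm_nonneg s1, norm_nonneg s2, norm_nonneg s3,
      norm_nonneg s4,
      mul_nonneg (norm_nonneg s1) (norm_nonneg s2),
      mul_nonneg (mul_nonneg (norm_nonneg s1) (norm_nonneg s2))
        (norm_nonneg s3)]
  refine ⟨hd, fun w hQ => ?_⟩
  by_contra hcon
  push_neg at hcon
  have hPw : w^4 + (a:ℂ)*w^3 + (b:ℂ)*w^2 + (c:ℂ)*w + (d:ℂ) ≠ 0 := by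
    intro h; exact absurd (S w h) (not_lt.mpr hcon)
  have hkey : w^4 + (a:ℂ)*w^3 + (b:ℂ)*w^2 + (c:ℂ)*w + (d:ℂ)
      = (d:ℂ) * ((d:ℂ)*w^4 + (c:ℂ)*w^3 + (b:ℂ)*w^2 + (a:ℂ)*w + 1) := by
    push_cast at hQ ⊢
    linear_combination w * hQ
  have hbound := revBound4 a b c d s1 s2 s3 s4 hf hs1 hs2 hs3 hs4 w hcon
  have habs2 := congrArg (fun x : ℂ => ‖x‖) hkey
  rw [norm_mul, Complex.norm_real, Real.norm_eq_abs] at habs2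
  nlinarith [(norm_pos_iff.mpr hPw), norm_nonneg
    ((d:ℂ)*w^4 + (c:ℂ)*w^3 + (b:ℂ)*w^2 + (a:ℂ)*w + 1), abs_nonneg d]

/-- Forward Schur step, cubic. -/
private lemma fwd3 (M A B C : ℝ) (hM : 0 < M)
    (S : ∀ z : ℂ, (M:ℂ)*z^3 + (A:ℂ)*z^2 + (B:ℂ)*z + (C:ℂ) = 0 → ‖z‖ < 1) :
    |C| < M ∧ ∀ z : ℂ, ((M^2-C^2:ℝ):ℂ)*z^2 + ((M*A-C*B:ℝ):ℂ)*z + ((M*B-C*A:ℝ):ℂ) = 0 →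
      ‖z‖ < 1 := by
  have hM0 : (M:ℂ) ≠ 0 := by exact_mod_cast hM.ne'
  obtain ⟨s1, s2, s3, hf⟩ := factor3' (M:ℂ) (A:ℂ) (B:ℂ) (C:ℂ) hM0
  have hs1 : ‖s1‖ < 1 := S s1 ((hf s1).trans (by rw [sub_self s1]; ring))
  have hs2 : ‖s2‖ < 1 := S s2 ((hf s2).trans (by rw [sub_self s2]; ring))
  have hs3 : ‖s3‖ < 1 := S s3 ((hf s3).trans (by rw [sub_self s3]; ring))
  have hC : |C| = M * (‖s1‖ * ‖s2‖ * ‖s3‖) := by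
    rw [← Real.norm_eq_abs, ← Complex.norm_real,
      show (C:ℂ) = (M:ℂ) * (-(s1 * s2 * s3)) by linear_combination hf 0]
    rw [norm_mul, Complex.norm_real, Real.norm_eq_abs, abs_of_pos hM]
    simp [norm_mul]
  have hCM : |C| < M := by
    rw [hC]
    have h12 : ‖s1‖ * ‖s2‖ < 1 := by
      nlinarith [norm_nonneg s1, norm_nonneg s2]
    have h123 : ‖s1‖ * ‖s2‖ * ‖s3‖ < 1 := by
      nlinarith [norm_nonneg s3,
        mul_nonneg (norm_nonneg s1) (norm_nonneg s2)]
    nlinarith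
  refine ⟨hCM, fun w hQ => ?_⟩
  by_contra hcon
  push_neg at hcon
  have hPw : (M:ℂ)*w^3 + (A:ℂ)*w^2 + (B:ℂ)*w + (C:ℂ) ≠ 0 := by
    intro h; exact absurd (S w h) (not_lt.mpr hcon)
  have hkey : (M:ℂ) * ((M:ℂ)*w^3 + (A:ℂ)*w^2 + (B:ℂ)*w + (C:ℂ))
      = (C:ℂ) * ((C:ℂ)*w^3 + (B:ℂ)*w^2 + (A:ℂ)*w + (M:ℂ)) := by
    push_cast at hQ ⊢
    linear_combination w * hQ
  have hbound := revBound3 M A B C hM s1 s2 s3 hf hs1 hs2 hs3 w hcon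
  have habs2 := congrArg (fun x : ℂ => ‖x‖) hkey
  rw [norm_mul, norm_mul, Complex.norm_real, Real.norm_eq_abs, Complex.norm_real, Real.norm_eq_abs, abs_of_pos hM] at habs2
  nlinarith [(norm_pos_iff.mpr hPw), norm_nonneg
    ((C:ℂ)*w^3 + (B:ℂ)*w^2 + (A:ℂ)*w + (M:ℂ)), abs_nonneg C]

/-- Forward Schur step, quadratic. -/
private lemma fwd2 (L B C : ℝ) (hL : 0 < L)
    (S : ∀ z : ℂ, (L:ℂ)*z^2 + (B:ℂ)*z + (C:ℂ) = 0 → ‖z‖ < 1) :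
    |C| < L ∧ ∀ z : ℂ, ((L^2-C^2:ℝ):ℂ)*z + ((L*B-C*B:ℝ):ℂ) = 0 → ‖z‖ < 1 := by
  have hL0 : (L:ℂ) ≠ 0 := by exact_mod_cast hL.ne'
  obtain ⟨t1, t2, hf⟩ := factor2' (L:ℂ) (B:ℂ) (C:ℂ) hL0
  have ht1 : ‖t1‖ < 1 := S t1 ((hf t1).trans (by rw [sub_self t1]; ring))
  have ht2 : ‖t2‖ < 1 := S t2 ((hf t2).trans (by rw [sub_self t2]; ring))
  have hC : |C| = L * (‖t1‖ * ‖t2‖) := by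
    rw [← Real.norm_eq_abs, ← Complex.norm_real,
      show (C:ℂ) = (L:ℂ) * (t1 * t2) by linear_combination hf 0]
    rw [norm_mul, Complex.norm_real, Real.norm_eq_abs, abs_of_pos hL]
    simp [norm_mul]
  have hCL : |C| < L := by
    rw [hC]
    have h12 : ‖t1‖ * ‖t2‖ < 1 := by
      nlinarith [norm_nonneg t1, norm_nonneg t2]
    nlinarith
  refine ⟨hCL, fun w hQ => ?_⟩
  by_contra hcon
  push_neg at hcon
  have hPw : (L:ℂ)*w^2 + (B:ℂ)*w + (C:ℂ) ≠ 0 := by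
    intro h; exact absurd (S w h) (not_lt.mpr hcon)
  have hkey : (L:ℂ) * ((L:ℂ)*w^2 + (B:ℂ)*w + (C:ℂ))
      = (C:ℂ) * ((C:ℂ)*w^2 + (B:ℂ)*w + (L:ℂ)) := by
    push_cast at hQ ⊢
    linear_combination w * hQ
  have hbound := revBound2 L B C hL t1 t2 hf ht1 ht2 w hcon
  have habs2 := congrArg (fun x : ℂ => ‖x‖) hkey
  rw [norm_mul, norm_mul, Complex.norm_real, Real.norm_eq_abs, Complex.norm_real, Real.norm_eq_abs, abs_of_pos hL] at habs2
  nlinarith [(norm_pos_iff.mpr hPw), norm_nonneg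
    ((C:ℂ)*w^2 + (B:ℂ)*w + (L:ℂ)), abs_nonneg C]

/-- Backward Schur step, quadratic from linear. -/
private lemma bwd2 (L B C : ℝ) (hL : 0 < L) (hC : |C| < L)
    (S1 : ∀ z : ℂ, ((L^2-C^2:ℝ):ℂ)*z + ((L*B-C*B:ℝ):ℂ) = 0 → ‖z‖ < 1) :
    ∀ z : ℂ, (L:ℂ)*z^2 + (B:ℂ)*z + (C:ℂ) = 0 → ‖z‖ < 1 := by
  have hL1 : 0 < L^2 - C^2 := by nlinarith [abs_nonneg C, sq_abs C]
  have hL10 : ((L^2 - C^2 : ℝ):ℂ) ≠ 0 := by exact_mod_cast hL1.ne'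
  have hL10' : (L:ℂ)^2 - (C:ℂ)^2 ≠ 0 := by push_cast at hL10; exact hL10
  set t : ℝ := -(L*B - C*B)/(L^2 - C^2) with htdef
  have hroot : ((L^2-C^2:ℝ):ℂ)*((t:ℝ):ℂ) + ((L*B-C*B:ℝ):ℂ) = 0 := by
    rw [htdef]; push_cast; field_simp [hL10']; ring
  have ht : |t| < 1 := by
    have := S1 ((t:ℝ):ℂ) hroot
    rwa [Complex.norm_real, Real.norm_eq_abs] at this
  intro w hw
  by_contra hcon
  push_neg at hcon
  have hQw0 : ((L^2-C^2:ℝ):ℂ)*w + ((L*B-C*B:ℝ):ℂ) ≠ 0 := by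
    intro h; exact absurd (S1 w h) (not_lt.mpr hcon)
  have h2 : (L:ℂ)*w*(((L^2-C^2:ℝ):ℂ)*w + ((L*B-C*B:ℝ):ℂ))
      = -((C:ℂ)*(((L*B-C*B:ℝ):ℂ)*w + ((L^2-C^2:ℝ):ℂ))) := by
    push_cast at hw ⊢
    linear_combination ((L:ℂ)^2 - (C:ℂ)^2) * hw
  -- factor the linear polynomial and its reversal through the real root t
  have hq : ((L^2-C^2:ℝ):ℂ)*w + ((L*B-C*B:ℝ):ℂ) = ((L^2-C^2:ℝ):ℂ) * (w - ((t:ℝ):ℂ)) := by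
    rw [htdef]; push_cast; field_simp [hL10']; ring
  have hqs : ((L*B-C*B:ℝ):ℂ)*w + ((L^2-C^2:ℝ):ℂ) = ((L^2-C^2:ℝ):ℂ) * (1 - ((t:ℝ):ℂ)*w) := by
    rw [htdef]; push_cast; field_simp [hL10']; ring
  have hconjt : (starRingEnd ℂ) w - ((t:ℝ):ℂ) = (starRingEnd ℂ) (w - ((t:ℝ):ℂ)) := by
    simp [map_sub, Complex.conj_ofReal]
  have hbound : ‖(((L*B-C*B:ℝ):ℂ)*w + ((L^2-C^2:ℝ):ℂ))‖
      ≤ ‖(((L^2-C^2:ℝ):ℂ)*w + ((L*B-C*B:ℝ):ℂ))‖ := by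
    rw [hq, hqs, norm_mul, norm_mul]
    have hk := key w ((t:ℝ):ℂ) hcon (by rwa [Complex.norm_real, Real.norm_eq_abs])
    rw [hconjt, Complex.norm_conj] at hk
    have : (0:ℝ) ≤ ‖((L^2-C^2 : ℝ):ℂ)‖ := norm_nonneg _
    gcongr
  have habs2 := congrArg (fun x : ℂ => ‖x‖) h2
  rw [norm_mul, norm_mul, norm_neg, norm_mul, Complex.norm_real, Real.norm_eq_abs, Complex.norm_real, Real.norm_eq_abs,
    abs_of_pos hL] at habs2
  have hQpos : 0 < ‖(((L^2-C^2:ℝ):ℂ)*w + ((L*B-C*B:ℝ):ℂ))‖ := (norm_pos_iff.mpr hQw0)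
  have c1 : L * ‖(((L^2-C^2:ℝ):ℂ)*w + ((L*B-C*B:ℝ):ℂ))‖
      ≤ L * ‖w‖ * ‖(((L^2-C^2:ℝ):ℂ)*w + ((L*B-C*B:ℝ):ℂ))‖ := by
    nlinarith [mul_le_mul_of_nonneg_left hcon (mul_nonneg hL.le hQpos.le)]
  have c2 : |C| * ‖(((L*B-C*B:ℝ):ℂ)*w + ((L^2-C^2:ℝ):ℂ))‖
      ≤ |C| * ‖(((L^2-C^2:ℝ):ℂ)*w + ((L*B-C*B:ℝ):ℂ))‖ :=
    mul_le_mul_of_nonneg_left hbound (abs_nonneg C)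
  have c3 : |C| * ‖(((L^2-C^2:ℝ):ℂ)*w + ((L*B-C*B:ℝ):ℂ))‖
      < L * ‖(((L^2-C^2:ℝ):ℂ)*w + ((L*B-C*B:ℝ):ℂ))‖ :=
    mul_lt_mul_of_pos_right hC hQpos
  linarith

/-- Backward Schur step, cubic from quadratic. -/
private lemma bwd3 (M A B C : ℝ) (hM : 0 < M) (hC : |C| < M)
    (S2 : ∀ z : ℂ, ((M^2-C^2:ℝ):ℂ)*z^2 + ((M*A-C*B:ℝ):ℂ)*z + ((M*B-C*A:ℝ):ℂ) = 0 →
      ‖z‖ < 1) :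
    ∀ z : ℂ, (M:ℂ)*z^3 + (A:ℂ)*z^2 + (B:ℂ)*z + (C:ℂ) = 0 → ‖z‖ < 1 := by
  have hL1 : 0 < M^2 - C^2 := by nlinarith [abs_nonneg C, sq_abs C]
  have hL10 : ((M^2 - C^2 : ℝ):ℂ) ≠ 0 := by exact_mod_cast hL1.ne'
  obtain ⟨t1, t2, hf⟩ := factor2' ((M^2-C^2:ℝ):ℂ) ((M*A-C*B:ℝ):ℂ) ((M*B-C*A:ℝ):ℂ) hL10
  have ht1 : ‖t1‖ < 1 := S2 t1 ((hf t1).trans (by rw [sub_self t1]; ring))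
  have ht2 : ‖t2‖ < 1 := S2 t2 ((hf t2).trans (by rw [sub_self t2]; ring))
  intro w hw
  by_contra hcon
  push_neg at hcon
  have hQw0 : ((M^2-C^2:ℝ):ℂ)*w^2 + ((M*A-C*B:ℝ):ℂ)*w + ((M*B-C*A:ℝ):ℂ) ≠ 0 := by
    intro h; exact absurd (S2 w h) (not_lt.mpr hcon)
  have h2 : (M:ℂ)*w*(((M^2-C^2:ℝ):ℂ)*w^2 + ((M*A-C*B:ℝ):ℂ)*w + ((M*B-C*A:ℝ):ℂ))
      = -((C:ℂ)*(((M*B-C*A:ℝ):ℂ)*w^2 + ((M*A-C*B:ℝ):ℂ)*w + ((M^2-C^2:ℝ):ℂ))) := by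
    push_cast at hw ⊢
    linear_combination ((M:ℂ)^2 - (C:ℂ)^2) * hw
  have hbound := revBound2 (M^2-C^2) (M*A-C*B) (M*B-C*A) hL1 t1 t2 hf ht1 ht2 w hcon
  have habs2 := congrArg (fun x : ℂ => ‖x‖) h2
  rw [norm_mul, norm_mul, norm_neg, norm_mul, Complex.norm_real, Real.norm_eq_abs, Complex.norm_real, Real.norm_eq_abs,
    abs_of_pos hM] at habs2
  have hQpos : 0 < ‖(((M^2-C^2:ℝ):ℂ)*w^2 + ((M*A-C*B:ℝ):ℂ)*w + ((M*B-C*A:ℝ):ℂ))‖ :=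
    (norm_pos_iff.mpr hQw0)
  have c1 : M * ‖(((M^2-C^2:ℝ):ℂ)*w^2 + ((M*A-C*B:ℝ):ℂ)*w + ((M*B-C*A:ℝ):ℂ))‖
      ≤ M * ‖w‖ * ‖(((M^2-C^2:ℝ):ℂ)*w^2 + ((M*A-C*B:ℝ):ℂ)*w + ((M*B-C*A:ℝ):ℂ))‖ := by
    nlinarith [mul_le_mul_of_nonneg_left hcon (mul_nonneg hM.le hQpos.le)]
  have c2 : |C| * ‖(((M*B-C*A:ℝ):ℂ)*w^2 + ((M*A-C*B:ℝ):ℂ)*w + ((M^2-C^2:ℝ):ℂ))‖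
      ≤ |C| * ‖(((M^2-C^2:ℝ):ℂ)*w^2 + ((M*A-C*B:ℝ):ℂ)*w + ((M*B-C*A:ℝ):ℂ))‖ :=
    mul_le_mul_of_nonneg_left hbound (abs_nonneg C)
  have c3 : |C| * ‖(((M^2-C^2:ℝ):ℂ)*w^2 + ((M*A-C*B:ℝ):ℂ)*w + ((M*B-C*A:ℝ):ℂ))‖
      < M * ‖(((M^2-C^2:ℝ):ℂ)*w^2 + ((M*A-C*B:ℝ):ℂ)*w + ((M*B-C*A:ℝ):ℂ))‖ :=
    mul_lt_mul_of_pos_right hC hQpos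
  linarith

/-- Backward Schur step, quartic from cubic. -/
private lemma bwd4 (a b c d : ℝ) (hd : |d| < 1)
    (S3 : ∀ z : ℂ, ((1-d^2:ℝ):ℂ)*z^3 + ((a-c*d:ℝ):ℂ)*z^2 + ((b-b*d:ℝ):ℂ)*z
      + ((c-a*d:ℝ):ℂ) = 0 → ‖z‖ < 1) :
    ∀ z : ℂ, z^4 + (a:ℂ)*z^3 + (b:ℂ)*z^2 + (c:ℂ)*z + (d:ℂ) = 0 → ‖z‖ < 1 := by
  have hm : 0 < 1 - d^2 := by nlinarith [abs_nonneg d, sq_abs d]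
  have hm0 : ((1 - d^2 : ℝ):ℂ) ≠ 0 := by exact_mod_cast hm.ne'
  obtain ⟨s1, s2, s3, hf⟩ :=
    factor3' ((1-d^2:ℝ):ℂ) ((a-c*d:ℝ):ℂ) ((b-b*d:ℝ):ℂ) ((c-a*d:ℝ):ℂ) hm0
  have hs1 : ‖s1‖ < 1 := S3 s1 ((hf s1).trans (by rw [sub_self s1]; ring))
  have hs2 : ‖s2‖ < 1 := S3 s2 ((hf s2).trans (by rw [sub_self s2]; ring))
  have hs3 : ‖s3‖ < 1 := S3 s3 ((hf s3).trans (by rw [sub_self s3]; ring))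
  intro w hw
  by_contra hcon
  push_neg at hcon
  have hQw0 : ((1-d^2:ℝ):ℂ)*w^3 + ((a-c*d:ℝ):ℂ)*w^2 + ((b-b*d:ℝ):ℂ)*w + ((c-a*d:ℝ):ℂ) ≠ 0 := by
    intro h; exact absurd (S3 w h) (not_lt.mpr hcon)
  have h2 : w*(((1-d^2:ℝ):ℂ)*w^3 + ((a-c*d:ℝ):ℂ)*w^2 + ((b-b*d:ℝ):ℂ)*w + ((c-a*d:ℝ):ℂ))
      = -((d:ℂ)*(((c-a*d:ℝ):ℂ)*w^3 + ((b-b*d:ℝ):ℂ)*w^2 + ((a-c*d:ℝ):ℂ)*w + ((1-d^2:ℝ):ℂ))) := by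
    push_cast at hw ⊢
    linear_combination (1 - (d:ℂ)^2) * hw
  have hbound := revBound3 (1-d^2) (a-c*d) (b-b*d) (c-a*d) hm s1 s2 s3 hf hs1 hs2 hs3 w hcon
  have habs2 := congrArg (fun x : ℂ => ‖x‖) h2
  rw [norm_mul, norm_neg, norm_mul, Complex.norm_real, Real.norm_eq_abs] at habs2
  have hQpos : 0 < ‖(((1-d^2:ℝ):ℂ)*w^3 + ((a-c*d:ℝ):ℂ)*w^2 + ((b-b*d:ℝ):ℂ)*w + ((c-a*d:ℝ):ℂ))‖ :=
    (norm_pos_iff.mpr hQw0)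
  have c1 : ‖(((1-d^2:ℝ):ℂ)*w^3 + ((a-c*d:ℝ):ℂ)*w^2 + ((b-b*d:ℝ):ℂ)*w + ((c-a*d:ℝ):ℂ))‖
      ≤ ‖w‖ * ‖(((1-d^2:ℝ):ℂ)*w^3 + ((a-c*d:ℝ):ℂ)*w^2 + ((b-b*d:ℝ):ℂ)*w + ((c-a*d:ℝ):ℂ))‖ := by
    nlinarith [mul_le_mul_of_nonneg_left hcon hQpos.le]
  have c2 : |d| * ‖(((c-a*d:ℝ):ℂ)*w^3 + ((b-b*d:ℝ):ℂ)*w^2 + ((a-c*d:ℝ):ℂ)*w + ((1-d^2:ℝ):ℂ))‖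
      ≤ |d| * ‖(((1-d^2:ℝ):ℂ)*w^3 + ((a-c*d:ℝ):ℂ)*w^2 + ((b-b*d:ℝ):ℂ)*w + ((c-a*d:ℝ):ℂ))‖ :=
    mul_le_mul_of_nonneg_left hbound (abs_nonneg d)
  have c3 : |d| * ‖(((1-d^2:ℝ):ℂ)*w^3 + ((a-c*d:ℝ):ℂ)*w^2 + ((b-b*d:ℝ):ℂ)*w + ((c-a*d:ℝ):ℂ))‖
      < 1 * ‖(((1-d^2:ℝ):ℂ)*w^3 + ((a-c*d:ℝ):ℂ)*w^2 + ((b-b*d:ℝ):ℂ)*w + ((c-a*d:ℝ):ℂ))‖ :=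
    mul_lt_mul_of_pos_right hd hQpos
  linarith



private lemma sq_lt' (x L : ℝ) (h : |x| < L) : 0 < L^2 - x^2 := by
  nlinarith [abs_nonneg x, sq_abs x]

private lemma pos_fac (x y p : ℝ) (hx : 0 < x) (hy : 0 < y) (h : 0 < x*(y*p)) : 0 < p := by
  by_contra hp
  push_neg at hp
  nlinarith [mul_pos hx hy, mul_nonneg (mul_pos hx hy).le (neg_nonneg.mpr hp)]

private lemma pos_fac2 (x p : ℝ) (hx : 0 < x) (h : 0 < x*p) : 0 < p := by
  by_contra hp
  push_neg at hp
  nlinarith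

private lemma arith1 (L u v : ℝ) (hLu : 0 < L - u) (h : (L-u)*|v| < L^2-u^2) : |v| < L+u := by
  nlinarith [abs_nonneg v]

private lemma arith2 (L u v : ℝ) (h2 : 0 < L - u) (h1 : |v| < L+u) : (L-u)*|v| < L^2-u^2 := by
  nlinarith [abs_nonneg v]

/-- Corollary (quartic case of Schur's theorem): the real quartic polynomial
`λ⁴ + aλ³ + bλ² + cλ + d` is Schur stable (all complex roots in the open unit disk)
iff `|c − ad| < 1 − d²`, `|a + c| < b + d + 1`, and
`b < (1 + d) + (c − ad)(a − c)/(d − 1)²`. -/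
theorem quartic_schur_stable (a b c d : ℝ) :
    (∀ z : ℂ, z ^ 4 + (a : ℂ) * z ^ 3 + (b : ℂ) * z ^ 2 + (c : ℂ) * z + (d : ℂ) = 0 →
        ‖z‖ < 1) ↔
      (|c - a * d| < 1 - d ^ 2 ∧ |a + c| < b + d + 1 ∧
        b < (1 + d) + (c - a * d) * (a - c) / (d - 1) ^ 2) := by
  have i1 : ((1-d^2)^2-(c-a*d)^2) + ((1-d^2)*(b-b*d)-(c-a*d)*(a-c*d))
      + ((1-d^2)*(a-c*d)-(c-a*d)*(b-b*d))
      = ((1-d^2)-(c-a*d)) * ((1-d)*(1+a+b+c+d)) := by ring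
  have i2 : ((1-d^2)^2-(c-a*d)^2) + ((1-d^2)*(b-b*d)-(c-a*d)*(a-c*d))
      - ((1-d^2)*(a-c*d)-(c-a*d)*(b-b*d))
      = ((1-d^2)+(c-a*d)) * ((1-d)*(1-a+b-c+d)) := by ring
  have i3 : ((1-d^2)^2-(c-a*d)^2) - ((1-d^2)*(b-b*d)-(c-a*d)*(a-c*d))
      = (1+d) * ((1+d)*(1-d)^2 - b*(1-d)^2 + (c-a*d)*(a-c)) := by ring
  have i4 : (1-d^2)^2 - (c-a*d)^2 = ((1-d^2)-(c-a*d)) * ((1-d^2)+(c-a*d)) := by ring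
  constructor
  · intro S4
    obtain ⟨hd, S3⟩ := fwd4 a b c d S4
    obtain ⟨hdl, hdr⟩ := abs_lt.mp hd
    have hd1 : 0 < 1 - d := by linarith
    have h1d : 0 < 1 + d := by linarith
    have hm : 0 < 1 - d^2 := by nlinarith [mul_pos hd1 h1d]
    obtain ⟨hn, S2⟩ := fwd3 (1-d^2) (a-c*d) (b-b*d) (c-a*d) hm S3
    obtain ⟨hmn1', hmn2'⟩ := abs_lt.mp hn
    have hmn1 : 0 < (1-d^2) - (c-a*d) := by linarith
    have hmn2 : 0 < (1-d^2) + (c-a*d) := by linarith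
    have hL2 : 0 < (1-d^2)^2 - (c-a*d)^2 := by
      rw [i4]; exact mul_pos hmn1 hmn2
    obtain ⟨hu, S1⟩ := fwd2 ((1-d^2)^2-(c-a*d)^2)
      ((1-d^2)*(a-c*d)-(c-a*d)*(b-b*d)) ((1-d^2)*(b-b*d)-(c-a*d)*(a-c*d)) hL2 S2
    obtain ⟨hu1', hu2'⟩ := abs_lt.mp hu
    have hLu : 0 < ((1-d^2)^2-(c-a*d)^2) - ((1-d^2)*(b-b*d)-(c-a*d)*(a-c*d)) := by linarith
    have hL1 := sq_lt' ((1-d^2)*(b-b*d)-(c-a*d)*(a-c*d)) ((1-d^2)^2-(c-a*d)^2) hu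
    have hv' := (lin_stable (((1-d^2)^2-(c-a*d)^2)^2 - ((1-d^2)*(b-b*d)-(c-a*d)*(a-c*d))^2)
      (((1-d^2)^2-(c-a*d)^2)*((1-d^2)*(a-c*d)-(c-a*d)*(b-b*d))
        - ((1-d^2)*(b-b*d)-(c-a*d)*(a-c*d))*((1-d^2)*(a-c*d)-(c-a*d)*(b-b*d))) hL1).mp S1
    rw [show ((1-d^2)^2-(c-a*d)^2)*((1-d^2)*(a-c*d)-(c-a*d)*(b-b*d))
          - ((1-d^2)*(b-b*d)-(c-a*d)*(a-c*d))*((1-d^2)*(a-c*d)-(c-a*d)*(b-b*d))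
          = (((1-d^2)^2-(c-a*d)^2) - ((1-d^2)*(b-b*d)-(c-a*d)*(a-c*d)))
            * ((1-d^2)*(a-c*d)-(c-a*d)*(b-b*d)) by ring, abs_mul, abs_of_pos hLu] at hv'
    have hv := arith1 _ _ _ hLu hv'
    obtain ⟨hv1', hv2'⟩ := abs_lt.mp hv
    refine ⟨hn, ?_, ?_⟩
    · -- |a + c| < b + d + 1
      have p1 : 0 < 1+a+b+c+d := by
        refine pos_fac _ _ _ hmn1 hd1 ?_
        rw [← i1]; linarith
      have p2 : 0 < 1-a+b-c+d := by
        refine pos_fac _ _ _ hmn2 hd1 ?_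
        rw [← i2]; linarith
      exact abs_lt.mpr ⟨by linarith, by linarith⟩
    · -- b < (1 + d) + (c - a d)(a - c)/(d - 1)²
      have hdd : (0:ℝ) < (d-1)^2 := by
        rw [show (d-1)^2 = (1-d)*(1-d) by ring]; exact mul_pos hd1 hd1
      have hY : 0 < (1+d)*(1-d)^2 - b*(1-d)^2 + (c-a*d)*(a-c) := by
        refine pos_fac2 _ _ h1d ?_
        rw [← i3]; linarith
      have hb : b - (1+d) < (c-a*d)*(a-c)/(d-1)^2 := by
        rw [lt_div_iff₀ hdd]
        linarith [hY]
      linarith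
  · rintro ⟨h1, h2, h3⟩
    have hm : 0 < 1 - d^2 := lt_of_le_of_lt (abs_nonneg _) h1
    have hd : |d| < 1 := by
      have hsq : d^2 < 1 := by linarith
      exact (sq_lt_one_iff_abs_lt_one d).mp hsq
    obtain ⟨hdl, hdr⟩ := abs_lt.mp hd
    have hd1 : 0 < 1 - d := by linarith
    have h1d : 0 < 1 + d := by linarith
    obtain ⟨hmn1', hmn2'⟩ := abs_lt.mp h1
    have hmn1 : 0 < (1-d^2) - (c-a*d) := by linarith
    have hmn2 : 0 < (1-d^2) + (c-a*d) := by linarith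
    obtain ⟨q1', q2'⟩ := abs_lt.mp h2
    have p1 : 0 < 1+a+b+c+d := by linarith
    have p2 : 0 < 1-a+b-c+d := by linarith
    have hdd : (0:ℝ) < (d-1)^2 := by
      rw [show (d-1)^2 = (1-d)*(1-d) by ring]; exact mul_pos hd1 hd1
    have hY : 0 < (1+d)*(1-d)^2 - b*(1-d)^2 + (c-a*d)*(a-c) := by
      have hb : b - (1+d) < (c-a*d)*(a-c)/(d-1)^2 := by linarith
      rw [lt_div_iff₀ hdd] at hb
      linarith [hb]
    have hXu : 0 < ((1-d^2)^2-(c-a*d)^2) - ((1-d^2)*(b-b*d)-(c-a*d)*(a-c*d)) := by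
      rw [i3]; exact mul_pos h1d hY
    have hlv0 : 0 < ((1-d^2)^2-(c-a*d)^2) + ((1-d^2)*(b-b*d)-(c-a*d)*(a-c*d))
        + ((1-d^2)*(a-c*d)-(c-a*d)*(b-b*d)) := by
      rw [i1]; exact mul_pos hmn1 (mul_pos hd1 p1)
    have hlv2 : 0 < ((1-d^2)^2-(c-a*d)^2) + ((1-d^2)*(b-b*d)-(c-a*d)*(a-c*d))
        - ((1-d^2)*(a-c*d)-(c-a*d)*(b-b*d)) := by
      rw [i2]; exact mul_pos hmn2 (mul_pos hd1 p2)
    have hu : |(1-d^2)*(b-b*d)-(c-a*d)*(a-c*d)| < (1-d^2)^2-(c-a*d)^2 :=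
      abs_lt.mpr ⟨by linarith, by linarith⟩
    have hL2 : 0 < (1-d^2)^2-(c-a*d)^2 := lt_of_le_of_lt (abs_nonneg _) hu
    have hv : |(1-d^2)*(a-c*d)-(c-a*d)*(b-b*d)|
        < ((1-d^2)^2-(c-a*d)^2) + ((1-d^2)*(b-b*d)-(c-a*d)*(a-c*d)) :=
      abs_lt.mpr ⟨by linarith, by linarith⟩
    have hL1 := sq_lt' ((1-d^2)*(b-b*d)-(c-a*d)*(a-c*d)) ((1-d^2)^2-(c-a*d)^2) hu
    have hQlin : |((1-d^2)^2-(c-a*d)^2)*((1-d^2)*(a-c*d)-(c-a*d)*(b-b*d))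
        - ((1-d^2)*(b-b*d)-(c-a*d)*(a-c*d))*((1-d^2)*(a-c*d)-(c-a*d)*(b-b*d))|
        < ((1-d^2)^2-(c-a*d)^2)^2 - ((1-d^2)*(b-b*d)-(c-a*d)*(a-c*d))^2 := by
      rw [show ((1-d^2)^2-(c-a*d)^2)*((1-d^2)*(a-c*d)-(c-a*d)*(b-b*d))
          - ((1-d^2)*(b-b*d)-(c-a*d)*(a-c*d))*((1-d^2)*(a-c*d)-(c-a*d)*(b-b*d))
          = (((1-d^2)^2-(c-a*d)^2) - ((1-d^2)*(b-b*d)-(c-a*d)*(a-c*d)))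
            * ((1-d^2)*(a-c*d)-(c-a*d)*(b-b*d)) by ring, abs_mul, abs_of_pos hXu]
      exact arith2 _ _ _ hXu hv
    have S1 := (lin_stable (((1-d^2)^2-(c-a*d)^2)^2 - ((1-d^2)*(b-b*d)-(c-a*d)*(a-c*d))^2)
      (((1-d^2)^2-(c-a*d)^2)*((1-d^2)*(a-c*d)-(c-a*d)*(b-b*d))
        - ((1-d^2)*(b-b*d)-(c-a*d)*(a-c*d))*((1-d^2)*(a-c*d)-(c-a*d)*(b-b*d)))
      hL1).mpr hQlin
    have S2 := bwd2 ((1-d^2)^2-(c-a*d)^2) ((1-d^2)*(a-c*d)-(c-a*d)*(b-b*d))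
      ((1-d^2)*(b-b*d)-(c-a*d)*(a-c*d)) hL2 hu S1
    have S3 := bwd3 (1-d^2) (a-c*d) (b-b*d) (c-a*d) hm h1 S2
    exact bwd4 a b c d hd S3
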